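/- For positive reals γ_bn and thresholds t_n = 2^{2R_n}-1, t_f = 2^{2R_f}-1 (R_n, R_f > 0), the constraint system 0 ≤ α_n ≤ α_f, α_n + α_f ≤ 1, α_n γ_bn ≥ t_n, and α_f γ_bn ≥ t_f (α_n γ_bn + 1) has a solution (α_n, α_f) if and only if t_n/γ_bn ≤ min(1/2, (γ_bn - t_f)/(γ_bn (t_f + 1))) and γ_bn ≥ t_f. -/
import Mathlib


/-- HD C-NOMA BS power-allocation feasibility (Theorem 1, BS part). -/
theorem stmt_0 (γbn Rn Rf : ℝ) (hγ : 0 < γbn) (hRn : 0 < Rn) (hRf : 0 < Rf)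
    (tn tf : ℝ) (htn : tn = 2 ^ (2 * Rn) - 1) (htf : tf = 2 ^ (2 * Rf) - 1) :
    (∃ αn αf : ℝ, 0 ≤ αn ∧ αn ≤ αf ∧ αn + αf ≤ 1 ∧
      αn * γbn ≥ tn ∧ αf * γbn ≥ tf * (αn * γbn + 1)) ↔
    (tn / γbn ≤ min (1 / 2) ((γbn - tf) / (γbn * (tf + 1))) ∧ γbn ≥ tf) := by
  have h2n : (1:ℝ) < 2 ^ (2 * Rn) :=
    Real.one_lt_rpow_iff_of_pos (by norm_num) |>.mpr (Or.inl ⟨by norm_num, by linarith⟩)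
  have h2f : (1:ℝ) < 2 ^ (2 * Rf) :=
    Real.one_lt_rpow_iff_of_pos (by norm_num) |>.mpr (Or.inl ⟨by norm_num, by linarith⟩)
  have htnp : 0 < tn := by rw [htn]; linarith
  have htfp : 0 < tf := by rw [htf]; linarith
  constructor
  · rintro ⟨αn, αf, h0, h1, h2, h3, h4⟩
    have hkey : tn * (tf + 1) ≤ γbn - tf := by nlinarith
    have hγtf : γbn ≥ tf := by nlinarith
    refine ⟨le_min ?_ ?_, hγtf⟩
    · rw [div_le_iff₀ hγ]; nlinarith
    · rw [div_le_div_iff₀ hγ (by positivity)]; nlinarith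
  · rintro ⟨hmin, hγtf⟩
    have hm1 := le_trans hmin (min_le_left _ _)
    have hm2 := le_trans hmin (min_le_right _ _)
    rw [div_le_iff₀ hγ] at hm1
    rw [div_le_div_iff₀ hγ (by positivity)] at hm2
    have hkey : tn * (tf + 1) ≤ γbn - tf := by nlinarith
    refine ⟨tn / γbn, 1 - tn / γbn, by positivity, by
        rw [div_le_iff₀ hγ] at *; nlinarith [div_le_iff₀ hγ |>.mpr hm1], ?_, ?_, ?_⟩
    · ring_nf; linarith
    · rw [ge_iff_le, div_mul_eq_mul_div, mul_div_assoc, div_self hγ.ne', mul_one]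
    · have h : tn / γbn * γbn = tn := by field_simp
      rw [h]; nlinarith
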